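/- The categories Ram (finite chains with monotone injections) and InfRam (finite chains together with chains of order type ω, with embeddings) are Tukey unrelated: there is no pre-adjunction from Ram to InfRam and no pre-adjunction from InfRam to Ram. -/

import Mathlib

open CategoryTheory

/-- A pre-adjunction from `B` to `C` (Mašulović). -/
structure PreAdjunction (B : Type*) (C : Type*) [Category B] [Category C] where
  F : B → C
  H : C → B
  Φ : ∀ (X : B) (Y : C), (F X ⟶ Y) → (X ⟶ H Y)
  pa : ∀ (A X : B) (Y : C) (u : F X ⟶ Y) (f : A ⟶ X),
    ∃ v : F A ⟶ F X, f ≫ Φ X Y u = Φ A Y (v ≫ u)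

/-- Objects of the category `Ram`: finite chains. -/
structure RamOb where
  n : ℕ

/-- `Ram`: finite chains with strictly monotone (injective monotone) maps. -/
instance : Category RamOb where
  Hom a b := {f : Fin a.n → Fin b.n // StrictMono f}
  id a := ⟨id, strictMono_id⟩
  comp f g := ⟨g.1 ∘ f.1, g.2.comp f.2⟩
  id_comp f := Subtype.ext rfl
  comp_id f := Subtype.ext rfl
  assoc f g h := Subtype.ext rfl

/-- Objects of `InfRam`: all finite chains (`some n`, the chain `{0,…,n−1}`) together
with a chain of order type `ω` (`none`, the chain `ℕ`). -/
abbrev InfRamOb := Option ℕ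

/-- The chain carried by an object of `InfRam`. -/
def carr : InfRamOb → Type := fun o => o.elim ℕ Fin

instance carrLinearOrder : (o : InfRamOb) → LinearOrder (carr o)
  | none => inferInstanceAs (LinearOrder ℕ)
  | some n => inferInstanceAs (LinearOrder (Fin n))

/-- `InfRam`: finite chains and chains of order type `ω`, with order embeddings
(strictly monotone maps). -/
instance : Category InfRamOb where
  Hom a b := {f : carr a → carr b // StrictMono f}
  id a := ⟨id, strictMono_id⟩
  comp f g := ⟨g.1 ∘ f.1, g.2.comp f.2⟩
  id_comp f := Subtype.ext rfl
  comp_id f := Subtype.ext rfl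
  assoc f g h := Subtype.ext rfl

/-- `Ram` and `InfRam` are Tukey unrelated: there is no pre-adjunction in either
direction. -/
theorem ram_infRam_tukey_unrelated :
    ¬ Nonempty (PreAdjunction RamOb InfRamOb) ∧
    ¬ Nonempty (PreAdjunction InfRamOb RamOb) := by
  constructor
  · rintro ⟨P⟩
    -- every object of InfRam embeds into ω
    have emb : ∀ o : InfRamOb, (o ⟶ (none : InfRamOb)) := by
      intro o
      match o with
      | none => exact ⟨id, strictMono_id⟩
      | some k => exact ⟨fun i => (i : Fin k).val, fun a b h => h⟩
    set m := (P.H none).n with hm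
    obtain ⟨f, hf⟩ := P.Φ ⟨m + 1⟩ none (emb (P.F ⟨m + 1⟩))
    have hinj : Function.Injective f := hf.injective
    have hle : m + 1 ≤ m := by
      have := Fintype.card_le_of_injective f hinj; simp at this; omega
    omega
  · rintro ⟨P⟩
    set A : InfRamOb := some 1 with hA
    set X : InfRamOb := none with hX
    set g := P.Φ X (P.F X) (𝟙 _) with hg
    let fmk : ℕ → (A ⟶ X) := fun n =>
      ⟨fun _ => n, fun a b hab => absurd (Subsingleton.elim (α := Fin 1) a b) (ne_of_lt hab)⟩
    have h := fun n => P.pa A X (P.F X) (𝟙 _) (fmk n)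
    choose v hv using h
    have hfin : Finite (P.F A ⟶ P.F X) :=
      inferInstanceAs (Finite {f : Fin (P.F A).n → Fin (P.F X).n // StrictMono f})
    obtain ⟨a, b, hab, hvab⟩ := Finite.exists_ne_map_eq_of_infinite v
    have heq : fmk a ≫ g = fmk b ≫ g := by
      rw [hv a, hv b, hvab]
    exact hab (g.2.injective (congrFun (congrArg Subtype.val heq) (0 : Fin 1)))
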